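/- Suppose E ⊆ ℝⁿ is contained in B(0,1/2) and satisfies the cube porosity property: there exists M ∈ ℕ, M ≥ 4, such that for every x ∈ ℝⁿ, every r > 0, and every coordinate direction i ∈ {1,…,n}, there exists a grid point g in Gr(x,r,i,M) with A(g, r/M) ⊆ A(x,r) \ E. Then for every x ∈ ℝⁿ, i ∈ {1,…,n}, and k ∈ ℕ, the set V_x^i(2^{-1}M^{-k}) ∩ E ∩ A(x,1) can be covered by (M^{n-1} − 1)^k half-open axis-parallel cubes of side length M^{-k}, where V_x^i(δ) = {y ∈ ℝⁿ : |y^i − x^i| < δ}. -/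

import Mathlib

open Metric Set

/-- The half-open axis-parallel cube of side `r` centered at `c`. -/
def hcube {n : ℕ} (c : EuclideanSpace ℝ (Fin n)) (r : ℝ) : Set (EuclideanSpace ℝ (Fin n)) :=
  {y | ∀ i, y i ∈ Set.Ico (c i - r/2) (c i + r/2)}

/-- The grid `Gr(x,r,i,q)`: points of `A(x,r)` with `i`-th coordinate `x i` and the
other coordinates taken from the uniform `q`-grid. -/
def grid {n : ℕ} (x : EuclideanSpace ℝ (Fin n)) (r : ℝ) (i : Fin n) (q : ℕ) :
    Set (EuclideanSpace ℝ (Fin n)) :=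
  {g | g i = x i ∧ ∀ j : Fin n, j ≠ i → ∃ k : ℕ, 1 ≤ k ∧ k ≤ q ∧
      g j = (x j - r/2) + (r/(2*q)) * (2*k - 1)}

theorem step_cover {n : ℕ} (E : Set (EuclideanSpace ℝ (Fin n))) (M : ℕ) (hM : 4 ≤ M)
    (hpor : ∀ (x : EuclideanSpace ℝ (Fin n)) (r : ℝ), 0 < r → ∀ i : Fin n,
      ∃ g ∈ grid x r i M, hcube g (r / M) ⊆ hcube x r \ E)
    (x : EuclideanSpace ℝ (Fin n)) (i : Fin n) (c : EuclideanSpace ℝ (Fin n))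
    (r : ℝ) (hr : 0 < r) :
    ∃ s : Finset (EuclideanSpace ℝ (Fin n)), s.card ≤ M ^ (n-1) - 1 ∧
      {y : EuclideanSpace ℝ (Fin n) | |y i - x i| < 2⁻¹ * (r / M)} ∩ E ∩ hcube c r ⊆
        ⋃ c' ∈ s, hcube c' (r / M) := by
  classical
  have hM0 : (0:ℝ) < M := by
    have : (0:ℕ) < M := by omega
    exact_mod_cast this
  set u : ℝ := r / M with hu
  have hu0 : 0 < u := div_pos hr hM0
  have hhalf : r/(2*(M:ℝ)) = u/2 := by rw [hu]; ring
  set c' : EuclideanSpace ℝ (Fin n) := WithLp.toLp 2 (Function.update c.ofLp i (x i)) with hc'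
  have hc'i : c' i = x i := Function.update_self i (x i) c.ofLp
  have hc'j : ∀ j, j ≠ i → c' j = c j := fun j hj => Function.update_of_ne hj (x i) c.ofLp
  obtain ⟨g, hg, hgsub⟩ := hpor c' r hr i
  let ptf : ({j : Fin n // j ≠ i} → Fin M) → EuclideanSpace ℝ (Fin n) :=
    fun f => WithLp.toLp 2 (fun j => if h : j = i then x i else (c j - r/2) + (r/(2*M)) * (2*(f ⟨j, h⟩ : ℕ) + 1))
  let T : Finset (EuclideanSpace ℝ (Fin n)) := Finset.image ptf Finset.univ
  have hgT : g ∈ T := by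
    choose kk hk1 hk2 hk3 using hg.2
    refine Finset.mem_image.2 ⟨fun j => ⟨kk j j.2 - 1,
      by have := hk1 j j.2; have := hk2 j j.2; omega⟩, Finset.mem_univ _, ?_⟩
    ext j
    by_cases h : j = i
    · subst h
      simp only [ptf, PiLp.toLp_apply, dif_pos rfl, dite_true]
      rw [hg.1, hc'i]
    · simp only [ptf, PiLp.toLp_apply, dif_neg h]
      have hk := hk3 j h
      have h1 : 1 ≤ kk j h := hk1 j h
      have hcast : ((kk j h - 1 : ℕ) : ℝ) = (kk j h : ℝ) - 1 := by
        push_cast [h1]; ring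
      rw [hk, hc'j j h, hcast]; ring
  refine ⟨T.erase g, ?_, ?_⟩
  · have h1 : (T.erase g).card = T.card - 1 := Finset.card_erase_of_mem hgT
    have h2 : T.card ≤ M ^ (n-1) := by
      calc T.card ≤ Finset.univ.card := Finset.card_image_le
        _ = M ^ (n-1) := by
            rw [Finset.card_univ, Fintype.card_fun]
            simp [Fintype.card_subtype_compl]
    omega
  · rintro y ⟨⟨hstrip, hyE⟩, hyc⟩
    simp only [mem_setOf_eq] at hstrip
    have hynotg : y ∉ hcube g u := fun hy => (hgsub hy).2 hyE
    have hfl : ∀ j : {j : Fin n // j ≠ i}, ⌊(y j - (c j - r/2)) / u⌋₊ < M := by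
      intro j
      have h1 := hyc j
      have ht0 : 0 ≤ y j - (c j - r/2) := by
        have := h1.1; simp only [mem_Ico] at h1; linarith [h1.1]
      have htr : y j - (c j - r/2) < r := by
        simp only [mem_Ico] at h1; linarith [h1.2]
      rw [Nat.floor_lt (div_nonneg ht0 hu0.le)]
      rw [div_lt_iff₀ hu0, hu]
      rw [mul_div_cancel₀ r (ne_of_gt hM0)]
      exact htr
    set f : {j : Fin n // j ≠ i} → Fin M :=
      fun j => ⟨⌊(y j - (c j - r/2)) / u⌋₊, hfl j⟩ with hf
    have hmem : y ∈ hcube (ptf f) u := by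
      intro j
      by_cases h : j = i
      · subst h
        simp only [ptf, PiLp.toLp_apply, dif_pos rfl, dite_true, mem_Ico]
        have := abs_lt.1 hstrip
        constructor <;> [linarith [this.1]; linarith [this.2]]
      · simp only [ptf, PiLp.toLp_apply, dif_neg h, mem_Ico, hhalf]
        set t := y j - (c j - r/2) with htdef
        have ht0 : 0 ≤ t := by
          have h1 := hyc j; simp only [mem_Ico] at h1; simp [htdef]; linarith [h1.1]
        have hk1 : (⌊t / u⌋₊ : ℝ) * u ≤ t := by
          rw [← le_div_iff₀ hu0]
          exact Nat.floor_le (div_nonneg ht0 hu0.le)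
        have hk2 : t < ((⌊t / u⌋₊ : ℝ) + 1) * u := by
          rw [← div_lt_iff₀ hu0]
          exact Nat.lt_floor_add_one _
        have hfj : ((f ⟨j, h⟩ : ℕ) : ℝ) = (⌊t / u⌋₊ : ℝ) := by simp [hf, htdef]
        rw [hfj]
        constructor <;> nlinarith
    refine Set.mem_biUnion (Finset.mem_erase.2 ⟨?_, Finset.mem_image_of_mem ptf (Finset.mem_univ f)⟩) hmem
    intro hEq
    rw [hEq] at hmem
    exact hynotg hmem

/-- Iterated grid porosity: if `E` has the cube porosity property with parameter `M`,
then the strip `V_x^i(2⁻¹M^{-k}) ∩ E ∩ A(x,1)` is covered by `(M^{n-1}-1)^k`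
half-open cubes of side `M^{-k}`. -/
theorem stmt7 {n : ℕ} (E : Set (EuclideanSpace ℝ (Fin n)))
    (hE : E ⊆ closedBall 0 (1/2)) (M : ℕ) (hM : 4 ≤ M)
    (hpor : ∀ (x : EuclideanSpace ℝ (Fin n)) (r : ℝ), 0 < r → ∀ i : Fin n,
      ∃ g ∈ grid x r i M, hcube g (r / M) ⊆ hcube x r \ E) :
    ∀ (x : EuclideanSpace ℝ (Fin n)) (i : Fin n) (k : ℕ),
      ∃ s : Finset (EuclideanSpace ℝ (Fin n)), s.card ≤ (M ^ (n-1) - 1) ^ k ∧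
        {y : EuclideanSpace ℝ (Fin n) | |y i - x i| < 2⁻¹ * (M:ℝ) ^ (-(k:ℤ))} ∩ E ∩ hcube x 1 ⊆
          ⋃ c ∈ s, hcube c ((M:ℝ) ^ (-(k:ℤ))) := by
  classical
  intro x i k
  induction k with
  | zero =>
    refine ⟨{x}, by simp, ?_⟩
    intro y hy
    simp only [Nat.cast_zero, neg_zero, zpow_zero]
    exact Set.mem_biUnion (Finset.mem_singleton_self x) hy.2
  | succ k ih =>
    obtain ⟨s, hcard, hcov⟩ := ih
    have hM0 : (0:ℝ) < M := by
      have : (0:ℕ) < M := by omega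
      exact_mod_cast this
    set r : ℝ := (M:ℝ) ^ (-(k:ℤ)) with hrdef
    have hr : 0 < r := zpow_pos hM0 _
    have hrM : r / M = (M:ℝ) ^ (-((k+1:ℕ)):ℤ) := by
      rw [hrdef, div_eq_mul_inv, ← zpow_neg_one, ← zpow_add₀ (ne_of_gt hM0)]
      congr 1
      push_cast
      ring
    choose t ht1 ht2 using fun c => step_cover E M hM hpor x i c r hr
    refine ⟨s.biUnion t, ?_, ?_⟩
    · calc (s.biUnion t).card ≤ ∑ c ∈ s, (t c).card := Finset.card_biUnion_le
        _ ≤ ∑ _c ∈ s, (M^(n-1)-1) := Finset.sum_le_sum (fun c _ => ht1 c)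
        _ = s.card * (M^(n-1)-1) := by rw [Finset.sum_const, smul_eq_mul]
        _ ≤ (M^(n-1)-1)^k * (M^(n-1)-1) := Nat.mul_le_mul_right _ hcard
        _ = (M^(n-1)-1)^(k+1) := (pow_succ _ _).symm
    · rintro y ⟨⟨hstrip, hyE⟩, hyx⟩
      simp only [mem_setOf_eq] at hstrip
      have hsmall : (M:ℝ) ^ (-((k+1:ℕ)):ℤ) ≤ r := by
        rw [← hrM]
        exact div_le_self hr.le (by exact_mod_cast le_trans (by norm_num) hM)
      have hstrip' : |y i - x i| < 2⁻¹ * r := by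
        refine lt_of_lt_of_le hstrip ?_
        have : (0:ℝ) ≤ 2⁻¹ := by norm_num
        exact mul_le_mul_of_nonneg_left hsmall this
      obtain ⟨c, hcs, hyc⟩ := Set.mem_iUnion₂.1 (hcov ⟨⟨hstrip', hyE⟩, hyx⟩)
      have hstrip'' : |y i - x i| < 2⁻¹ * (r / M) := by rw [hrM]; exact hstrip
      have := ht2 c ⟨⟨hstrip'', hyE⟩, hyc⟩
      rw [hrM] at this
      obtain ⟨c', hc's, hyc'⟩ := Set.mem_iUnion₂.1 this
      exact Set.mem_biUnion (Finset.mem_biUnion.2 ⟨c, hcs, hc's⟩) hyc'
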